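/- For integers m ≥ 1 and k with gcd(m,k) = 1, the product over all complex λ with λ^{2m} = -1 of |1 + λ^m - λ^k| equals 2^m + 1 - 2·(√2)^m · cos((2k - m)π/4). -/

import Mathlib

open Polynomial Complex

-- product of (x - root) over nthRoots
lemma aux_prod_lin (m : ℕ) (hm : 1 ≤ m) (d x : ℂ) :
    ((nthRoots m d).map (fun r => x - r)).prod = x ^ m - d := by
  have hmon : (X ^ m - C d).Monic := monic_X_pow_sub_C d (by omega)
  have hsp : Splits (X ^ m - C d) := IsAlgClosed.splits _
  have h := hsp.eq_prod_roots_of_monic hmon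
  have := congrArg (eval x) h
  simpa [eval_multiset_prod, Multiset.map_map, nthRoots] using this.symm

lemma aux_pow_map (m : ℕ) (hm : 1 ≤ m) (k : ℤ) (hmk : Int.gcd (m : ℤ) k = 1) :
    (nthRoots m (1 : ℂ)).map (fun η => η ^ k) = nthRoots m (1 : ℂ) := by
  have hm0 : (m : ℕ) ≠ 0 := by omega
  have hζ := Complex.isPrimitiveRoot_exp m hm0
  have hnodup : (nthRoots m (1 : ℂ)).Nodup := hζ.nthRoots_one_nodup
  obtain ⟨u, v, huv⟩ : IsCoprime (m : ℤ) k := Int.isCoprime_iff_gcd_eq_one.mpr hmk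
  have hne : ∀ η : ℂ, η ∈ nthRoots m (1 : ℂ) → η ≠ 0 := by
    intro η hη h0
    rw [mem_nthRoots (by omega)] at hη
    simp [h0, zero_pow hm0] at hη
  have hrec : ∀ η : ℂ, η ∈ nthRoots m (1 : ℂ) → (η ^ k) ^ v = η := by
    intro η hη
    have hη0 := hne η hη
    rw [mem_nthRoots (by omega)] at hη
    have hk : k * v = 1 + (-u) * m := by linarith
    rw [← zpow_mul, hk, zpow_add₀ hη0, mul_comm (-u) (m:ℤ), zpow_mul,
      zpow_natCast, hη]
    simp
  have hinj : ∀ η ∈ nthRoots m (1 : ℂ), ∀ η' ∈ nthRoots m (1 : ℂ),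
      η ^ k = η' ^ k → η = η' := by
    intro η hη η' hη' h
    rw [← hrec η hη, ← hrec η' hη', h]
  have hnd : ((nthRoots m (1 : ℂ)).map (fun η => η ^ k)).Nodup :=
    hnodup.map_on hinj
  have hsub : (nthRoots m (1 : ℂ)).map (fun η => η ^ k) ⊆ nthRoots m (1 : ℂ) := by
    intro x hx
    rw [Multiset.mem_map] at hx
    obtain ⟨η, hη, rfl⟩ := hx
    have hη0 := hne η hη
    rw [mem_nthRoots (by omega)] at hη ⊢
    rw [← zpow_natCast (η ^ k), ← zpow_mul, mul_comm, zpow_mul, zpow_natCast, hη]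
    simp
  refine Multiset.eq_of_le_of_card_le ((Multiset.le_iff_subset hnd).mpr hsub) ?_
  simp

lemma aux_key (m : ℕ) (hm : 1 ≤ m) (k : ℤ) (hmk : Int.gcd (m : ℤ) k = 1)
    (α a : ℂ) (hα : α ^ m = a) (x : ℂ) :
    ((nthRoots m a).map (fun lam => x - lam ^ k)).prod = x ^ m - a ^ k := by
  have hm0 : (m : ℕ) ≠ 0 := by omega
  have hζ := Complex.isPrimitiveRoot_exp m hm0
  have hαk : (α ^ k) ^ m = a ^ k := by
    rw [← hα, ← zpow_natCast α, ← zpow_mul, mul_comm, zpow_mul, zpow_natCast]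
  rw [hζ.nthRoots_eq hα, Multiset.map_map]
  have step1 : ∀ j : ℕ, x - ((fun i => cexp (2 * Real.pi * I / m) ^ i * α) j) ^ k
      = (fun η : ℂ => x - η ^ k * α ^ k) ((fun i => cexp (2 * Real.pi * I / m) ^ i * 1) j) := by
    intro j; simp [mul_zpow]
  calc ((Multiset.range m).map
        ((fun lam => x - lam ^ k) ∘ fun i => cexp (2 * Real.pi * I / m) ^ i * α)).prod
      = ((Multiset.range m).map
        ((fun η : ℂ => x - η ^ k * α ^ k) ∘ fun i => cexp (2 * Real.pi * I / m) ^ i * 1)).prod := by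
        congr 1
        apply Multiset.map_congr rfl
        intro j _
        exact step1 j
    _ = ((nthRoots m (1:ℂ)).map (fun η : ℂ => x - η ^ k * α ^ k)).prod := by
        rw [← Multiset.map_map, ← hζ.nthRoots_eq (one_pow m)]
    _ = (((nthRoots m (1:ℂ)).map (fun η : ℂ => η ^ k)).map (fun η : ℂ => x - η * α ^ k)).prod := by
        rw [Multiset.map_map]; rfl
    _ = ((nthRoots m (1:ℂ)).map (fun η : ℂ => x - η * α ^ k)).prod := by
        rw [aux_pow_map m hm k hmk]
    _ = ((Multiset.range m).map
        ((fun η : ℂ => x - η * α ^ k) ∘ fun i => cexp (2 * Real.pi * I / m) ^ i * 1)).prod := by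
        rw [← Multiset.map_map, ← hζ.nthRoots_eq (one_pow m)]
    _ = ((Multiset.range m).map
        ((fun r : ℂ => x - r) ∘ fun i => cexp (2 * Real.pi * I / m) ^ i * (α ^ k))).prod := by
        congr 1
        apply Multiset.map_congr rfl
        intro j _
        simp [mul_assoc]
    _ = ((nthRoots m ((α ^ k) ^ m)).map (fun r : ℂ => x - r)).prod := by
        rw [← Multiset.map_map, ← hζ.nthRoots_eq rfl]
    _ = x ^ m - a ^ k := by rw [aux_prod_lin m hm, hαk]

lemma aux_re (m : ℕ) (k : ℤ) :
    ((1 + I) ^ m * (-I) ^ k).re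
      = Real.sqrt 2 ^ m * Real.cos ((2 * (k : ℝ) - (m : ℝ)) * Real.pi / 4) := by
  have hsq : ((Real.sqrt 2 : ℝ) : ℂ) * ((Real.sqrt 2 : ℝ) : ℂ) = 2 := by
    norm_cast
    exact Real.mul_self_sqrt (by norm_num)
  have h1 : (1 + I : ℂ) = (Real.sqrt 2 : ℝ) * Complex.exp ((Real.pi / 4 : ℝ) * I) := by
    rw [Complex.exp_mul_I, ← Complex.ofReal_cos, ← Complex.ofReal_sin,
      Real.cos_pi_div_four, Real.sin_pi_div_four]
    push_cast
    linear_combination (-(1 + I) / 2) * hsq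
  have h2 : (-I : ℂ) = Complex.exp ((-(Real.pi / 2) : ℝ) * I) := by
    rw [Complex.exp_mul_I, ← Complex.ofReal_cos, ← Complex.ofReal_sin,
      Real.cos_neg, Real.sin_neg, Real.cos_pi_div_two, Real.sin_pi_div_two]
    push_cast
    ring
  rw [h1, h2, mul_pow, ← Complex.exp_nat_mul, ← Complex.exp_int_mul, mul_assoc,
    ← Complex.exp_add]
  have h3 : (m : ℂ) * (((Real.pi / 4 : ℝ)) * I) + (k : ℂ) * (((-(Real.pi / 2) : ℝ)) * I)
      = (((m : ℝ) * (Real.pi / 4) + (k : ℝ) * (-(Real.pi / 2)) : ℝ) : ℂ) * I := by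
    push_cast; ring
  rw [h3, ← Complex.ofReal_pow, Complex.re_ofReal_mul, Complex.exp_ofReal_mul_I_re]
  have h4 : (m : ℝ) * (Real.pi / 4) + (k : ℝ) * (-(Real.pi / 2))
      = -((2 * (k : ℝ) - (m : ℝ)) * Real.pi / 4) := by ring
  rw [h4, Real.cos_neg]

/-- For m ≥ 1, gcd(m,k) = 1, the product over all complex λ with λ^{2m} = -1 of
|1 + λ^m - λ^k| equals 2^m + 1 - 2·(√2)^m·cos((2k-m)π/4). -/
theorem stmt_5 (m : ℕ) (hm : 1 ≤ m) (k : ℤ) (hmk : Int.gcd (m : ℤ) k = 1) :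
    ((X ^ (2 * m) + C 1 : ℂ[X]).roots.map
      (fun lam => ‖1 + lam ^ m - lam ^ k‖)).prod
      = 2 ^ m + 1 - 2 * Real.sqrt 2 ^ m * Real.cos ((2 * (k : ℝ) - (m : ℝ)) * Real.pi / 4) := by
  have hm0 : m ≠ 0 := by omega
  have hmon1 : (X ^ m - C I : ℂ[X]).Monic := monic_X_pow_sub_C _ hm0
  have hmon2 : (X ^ m - C (-I) : ℂ[X]).Monic := monic_X_pow_sub_C _ hm0
  have hpoly : (X ^ (2 * m) + C 1 : ℂ[X]) = (X ^ m - C I) * (X ^ m - C (-I)) := by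
    rw [mul_comm 2 m, pow_mul, map_neg]
    have hsq : (C I : ℂ[X]) ^ 2 = -C 1 := by
      rw [← C_pow, Complex.I_sq]; simp
    linear_combination hsq
  have hroots : (X ^ (2 * m) + C 1 : ℂ[X]).roots = nthRoots m I + nthRoots m (-I) := by
    rw [hpoly, roots_mul (mul_ne_zero hmon1.ne_zero hmon2.ne_zero)]
    rfl
  rw [hroots, Multiset.map_add, Multiset.prod_add]
  -- replace lam ^ m by its value in each factor
  have e1 : (nthRoots m I).map (fun lam : ℂ => ‖1 + lam ^ m - lam ^ k‖)
      = (nthRoots m I).map (fun lam : ℂ => ‖1 + I - lam ^ k‖) := by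
    apply Multiset.map_congr rfl
    intro lam hlam
    rw [(mem_nthRoots (by omega)).mp hlam]
  have e2 : (nthRoots m (-I)).map (fun lam : ℂ => ‖1 + lam ^ m - lam ^ k‖)
      = (nthRoots m (-I)).map (fun lam : ℂ => ‖1 - I - lam ^ k‖) := by
    apply Multiset.map_congr rfl
    intro lam hlam
    rw [(mem_nthRoots (by omega)).mp hlam]
    ring_nf
  rw [e1, e2]
  have habs1 : ((nthRoots m I).map (fun lam : ℂ => ‖1 + I - lam ^ k‖)).prod
      = ‖((nthRoots m I).map (fun lam : ℂ => (1 + I) - lam ^ k)).prod‖ := by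
    rw [show ‖((nthRoots m I).map (fun lam : ℂ => (1 + I) - lam ^ k)).prod‖ = normHom ((nthRoots m I).map (fun lam : ℂ => (1 + I) - lam ^ k)).prod from rfl, map_multiset_prod, Multiset.map_map]
    rfl
  have habs2 : ((nthRoots m (-I)).map (fun lam : ℂ => ‖1 - I - lam ^ k‖)).prod
      = ‖((nthRoots m (-I)).map (fun lam : ℂ => (1 - I) - lam ^ k)).prod‖ := by
    rw [show ‖((nthRoots m (-I)).map (fun lam : ℂ => (1 - I) - lam ^ k)).prod‖ = normHom ((nthRoots m (-I)).map (fun lam : ℂ => (1 - I) - lam ^ k)).prod from rfl, map_multiset_prod, Multiset.map_map]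
    rfl
  obtain ⟨α, hα⟩ := IsAlgClosed.exists_pow_nat_eq (I : ℂ) (n := m) (by omega)
  obtain ⟨β, hβ⟩ := IsAlgClosed.exists_pow_nat_eq (-I : ℂ) (n := m) (by omega)
  rw [habs1, habs2, aux_key m hm k hmk α I hα (1 + I), aux_key m hm k hmk β (-I) hβ (1 - I)]
  have hconj : ((1 - I) ^ m - (-I) ^ k : ℂ) = (starRingEnd ℂ) ((1 + I) ^ m - I ^ k) := by
    rw [map_sub, map_pow, map_zpow₀, map_add, map_one, Complex.conj_I]
    ring_nf
  rw [hconj, Complex.norm_conj, ← sq, Complex.sq_norm, Complex.normSq_sub]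
  have h1 : Complex.normSq ((1 + I) ^ m) = 2 ^ m := by
    rw [map_pow]
    norm_num [Complex.normSq_apply]
  have h2 : Complex.normSq ((I : ℂ) ^ k) = 1 := by
    rw [map_zpow₀, Complex.normSq_I, one_zpow]
  have h3 : (starRingEnd ℂ) ((I : ℂ) ^ k) = (-I) ^ k := by
    rw [map_zpow₀, Complex.conj_I]
  rw [h1, h2, h3, aux_re m k]
  ring
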